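/- arXiv:2212.14105 — 2 statements merged into one kernel-verified Lean document; each statement's English description precedes it below -/
import Mathlib

section
/- Stratified identification with nonnegative weights: if (X, Y0, Y1, D0, D1) is independent of Z conditional on a discrete covariate W, with 0 < P(Z=1|W) < 1, the conditional reduced form RF_W = E[Y|Z=1,W] − E[Y|Z=0,W] nonnegative for all W and positive for some W, treatment monotonicity, exclusion, and E[Z|W] equal to the linear projection of Z on W, then E[h(X)·Y·Z̃]/E[Y·Z̃] = E[ω_W · E[h(X) | D1>D0, Y1>Y0, W]] / E[ω_W], where Z̃ = Z − E[Z|W] and ω_W = RF_W·(1−E[Z|W])·E[Z|W] ≥ 0 for all W. -/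
open MeasureTheory ProbabilityTheory
open scoped ENNReal NNReal

/-- Conditional mean of `f` given event `s`. -/
noncomputable def cmean {Ω : Type} [MeasurableSpace Ω] (μ : Measure Ω)
    (f : Ω → ℝ) (s : Set Ω) : ℝ :=
  (∫ ω in s, f ω ∂μ) / (μ s).toReal


lemma integrable_of_bdd {Ω : Type} [MeasurableSpace Ω] {ν : Measure Ω} [IsFiniteMeasure ν]
    {u : Ω → ℝ} (hu : Measurable u) {C : ℝ} (hC : ∀ ω, |u ω| ≤ C) : Integrable u ν :=
  ⟨hu.aestronglyMeasurable, HasFiniteIntegral.of_bounded (C := C)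
    (ae_of_all _ (fun ω => by simpa [Real.norm_eq_abs] using hC ω))⟩

lemma bin_abs_le_one {x : ℝ} (hx : x = 0 ∨ x = 1) : |x| ≤ 1 := by
  rcases hx with h|h <;> simp [h]

lemma measurable_comp_cntW {Ω : Type} [MeasurableSpace Ω] {W : Ω → ℝ}
    (hWm : Measurable W) (hWcnt : (Set.range W).Countable) (g : ℝ → ℝ) :
    Measurable (fun ω => g (W ω)) := by
  intro t _
  have heq : (fun ω => g (W ω)) ⁻¹' t = W ⁻¹' (g ⁻¹' t ∩ Set.range W) := by
    ext ω; simp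
  rw [heq]
  exact hWm ((hWcnt.mono Set.inter_subset_right).measurableSet)


lemma tower_cmean {Ω : Type} [MeasurableSpace Ω] (μ : Measure Ω) [IsProbabilityMeasure μ]
    {W : Ω → ℝ} (hWm : Measurable W) (hWcnt : (Set.range W).Countable)
    {f : Ω → ℝ} (hf : Integrable f μ) :
    ∫ ω, cmean μ f {ω' | W ω' = W ω} ∂μ = ∫ ω, f ω ∂μ := by
  classical
  haveI : Countable (Set.range W) := hWcnt.to_subtype
  set s : Set.range W → Set Ω := fun w => W ⁻¹' {(w : ℝ)} with hs
  have hm : ∀ i, MeasurableSet (s i) := fun i => hWm (measurableSet_singleton _)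
  have hd : Pairwise (Function.onFun Disjoint s) := by
    intro i j hij
    refine Set.disjoint_left.mpr fun ω hi hj => hij ?_
    have : (i : ℝ) = (j : ℝ) := by
      simp only [hs, Set.mem_preimage, Set.mem_singleton_iff] at hi hj
      rw [← hi, ← hj]
    exact Subtype.ext this
  have hu : (⋃ i, s i) = Set.univ := by
    ext ω
    simp only [Set.mem_iUnion, Set.mem_univ, iff_true, hs, Set.mem_preimage,
      Set.mem_singleton_iff]
    exact ⟨⟨W ω, Set.mem_range_self ω⟩, rfl⟩
  set g : Ω → ℝ := fun ω => cmean μ f {ω' | W ω' = W ω} with hgdef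
  have hgm : Measurable g :=
    measurable_comp_cntW hWm hWcnt (fun w => cmean μ f {ω' | W ω' = w})
  -- on each stratum, g is constant
  have hgs : ∀ (i : Set.range W) (ω : Ω), ω ∈ s i → g ω = cmean μ f (s i) := by
    intro i ω hω
    simp only [hs, Set.mem_preimage, Set.mem_singleton_iff] at hω
    simp only [hgdef, hω]
    rfl
  -- stratum integrals of g equal stratum integrals of f
  have hstratum : ∀ i : Set.range W, ∫ ω in s i, g ω ∂μ = ∫ ω in s i, f ω ∂μ := by
    intro i
    rw [setIntegral_congr_fun (hm i) (fun ω hω => hgs i ω hω), setIntegral_const, measureReal_def]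
    rcases eq_or_ne (μ (s i)) 0 with hz | hz
    · rw [Measure.restrict_eq_zero.mpr hz]
      simp [hz]
    · have hPt : (μ (s i)).toReal ≠ 0 :=
        ENNReal.toReal_ne_zero.mpr ⟨hz, measure_ne_top μ _⟩
      rw [cmean, smul_eq_mul, mul_div_cancel₀ _ hPt]
  -- integrability of g
  have hgint : Integrable g μ := by
    refine ⟨hgm.aestronglyMeasurable, ?_⟩
    rw [HasFiniteIntegral, ← setLIntegral_univ, ← hu,
      lintegral_iUnion hm hd]
    have hbound : ∀ i : Set.range W,
        (∫⁻ ω in s i, ‖g ω‖₊ ∂μ) ≤ ∫⁻ ω in s i, ‖f ω‖₊ ∂μ := by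
      intro i
      have hconst : (∫⁻ ω in s i, ‖g ω‖₊ ∂μ) = ‖cmean μ f (s i)‖₊ * μ (s i) := by
        rw [setLIntegral_congr_fun (hm i)
          (fun ω hω => by rw [hgs i ω hω]), setLIntegral_const]
      rw [hconst]
      rcases eq_or_ne (μ (s i)) 0 with hz | hz
      · simp [hz]
      · have hPt : (0:ℝ) < (μ (s i)).toReal :=
          ENNReal.toReal_pos hz (measure_ne_top μ _)
        have h1 : ‖cmean μ f (s i)‖ * (μ (s i)).toReal ≤ ∫ ω in s i, ‖f ω‖ ∂μ := by
          rw [cmean, norm_div, Real.norm_eq_abs (((μ (s i))).toReal),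
            abs_of_nonneg ENNReal.toReal_nonneg, div_mul_cancel₀ _ (ne_of_gt hPt)]
          exact norm_integral_le_integral_norm _
        have h2 : (‖cmean μ f (s i)‖₊ : ℝ≥0∞) * μ (s i)
            = ENNReal.ofReal (‖cmean μ f (s i)‖ * (μ (s i)).toReal) := by
          rw [ENNReal.ofReal_mul (norm_nonneg _), ofReal_norm, enorm_eq_nnnorm,
            ENNReal.ofReal_toReal (measure_ne_top μ _)]
        rw [h2]
        exact (ENNReal.ofReal_le_ofReal h1).trans
          (le_of_eq (ofReal_integral_norm_eq_lintegral_enorm (hf.integrableOn)))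
    calc (∑' i, ∫⁻ ω in s i, ‖g ω‖₊ ∂μ) ≤ ∑' i, ∫⁻ ω in s i, ‖f ω‖₊ ∂μ :=
          ENNReal.tsum_le_tsum hbound
      _ = ∫⁻ ω in ⋃ i, s i, ‖f ω‖₊ ∂μ := (lintegral_iUnion hm hd _).symm
      _ ≤ ∫⁻ ω, ‖f ω‖₊ ∂μ := setLIntegral_le_lintegral _ _
      _ < ⊤ := hf.2
  -- now the integral computation
  calc ∫ ω, g ω ∂μ = ∫ ω in ⋃ i, s i, g ω ∂μ := by rw [hu, setIntegral_univ]
    _ = ∑' i, ∫ ω in s i, g ω ∂μ := integral_iUnion hm hd (hu ▸ hgint.integrableOn)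
    _ = ∑' i, ∫ ω in s i, f ω ∂μ := tsum_congr hstratum
    _ = ∫ ω in ⋃ i, s i, f ω ∂μ := (integral_iUnion hm hd (hu ▸ hf.integrableOn)).symm
    _ = ∫ ω, f ω ∂μ := by rw [hu, setIntegral_univ]

lemma stratum_key {Ω : Type} [MeasurableSpace Ω] (μ : Measure Ω) [IsProbabilityMeasure μ]
    (Z D0 D1 Y0 Y1 D Y X : Ω → ℝ)
    (hZm : Measurable Z) (hD0m : Measurable D0) (hD1m : Measurable D1)
    (hY0m : Measurable Y0) (hY1m : Measurable Y1) (hXm : Measurable X)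
    (hZbin : ∀ ω, Z ω = 0 ∨ Z ω = 1)
    (hD0bin : ∀ ω, D0 ω = 0 ∨ D0 ω = 1)
    (hD1bin : ∀ ω, D1 ω = 0 ∨ D1 ω = 1)
    (hY0bin : ∀ ω, Y0 ω = 0 ∨ Y0 ω = 1)
    (hY1bin : ∀ ω, Y1 ω = 0 ∨ Y1 ω = 1)
    (hD : ∀ ω, D ω = Z ω * D1 ω + (1 - Z ω) * D0 ω)
    (hY : ∀ ω, Y ω = D ω * Y1 ω + (1 - D ω) * Y0 ω)
    (h : ℝ → ℝ) (hhm : Measurable h) (hint : Integrable (fun ω => h (X ω)) μ)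
    (s : Set Ω) (hs : MeasurableSet s) (hsne : μ s ≠ 0)
    (hind : IndepFun (fun ω => (X ω, Y0 ω, Y1 ω, D0 ω, D1 ω)) Z (μ[|s]))
    (hov1 : 0 < μ ({ω | Z ω = 1} ∩ s)) (hov2 : μ ({ω | Z ω = 1} ∩ s) < μ s)
    (hmonoD : ∀ᵐ ω ∂μ, D0 ω ≤ D1 ω) (hmonoY : ∀ᵐ ω ∂μ, Y0 ω ≤ Y1 ω)
    (c RF cc : ℝ) (hc : c = cmean μ Z s)
    (hRF : RF = cmean μ Y (s ∩ {ω' | Z ω' = 1}) - cmean μ Y (s ∩ {ω' | Z ω' = 0}))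
    (hcc : cc = cmean μ (fun ω' => h (X ω'))
        ({ω' | D0 ω' < D1 ω' ∧ Y0 ω' < Y1 ω'} ∩ s)) :
    cmean μ (fun ω => h (X ω) * Y ω * (Z ω - c)) s = RF * (1 - c) * c * cc
    ∧ cmean μ (fun ω => Y ω * (Z ω - c)) s = RF * (1 - c) * c := by
  classical
  set μc := μ[|s] with hμcdef
  haveI : IsProbabilityMeasure μc := cond_isProbabilityMeasure hsne
  have hPpos : (0:ℝ) < (μ s).toReal := ENNReal.toReal_pos hsne (measure_ne_top μ s)
  set P : ℝ := (μ s).toReal with hPdef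
  have hPne : P ≠ 0 := ne_of_gt hPpos
  -- translation between cmean over s and integrals w.r.t. μc
  have hcm : ∀ g : Ω → ℝ, cmean μ g s = ∫ ω, g ω ∂μc := by
    intro g
    rw [hμcdef, ProbabilityTheory.cond, integral_smul_measure, ENNReal.toReal_inv, cmean, smul_eq_mul,
      div_eq_inv_mul]
  have habs : μc ≪ μ := cond_absolutelyContinuous
  -- measurability of D and Y
  have hDm : Measurable D := by
    have : D = fun ω => Z ω * D1 ω + (1 - Z ω) * D0 ω := funext hD
    rw [this]
    exact (hZm.mul hD1m).add ((measurable_const.sub hZm).mul hD0m)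
  have hYm : Measurable Y := by
    have : Y = fun ω => D ω * Y1 ω + (1 - D ω) * Y0 ω := funext hY
    rw [this]
    exact (hDm.mul hY1m).add ((measurable_const.sub hDm).mul hY0m)
  -- potential outcomes under each arm
  set At : Ω → ℝ := fun ω => D1 ω * Y1 ω + (1 - D1 ω) * Y0 ω with hAtdef
  set Bt : Ω → ℝ := fun ω => D0 ω * Y1 ω + (1 - D0 ω) * Y0 ω with hBtdef
  set A : Ω → ℝ := fun ω => h (X ω) * At ω with hAdef
  set B : Ω → ℝ := fun ω => h (X ω) * Bt ω with hBdef
  set Z' : Ω → ℝ := fun ω => 1 - Z ω with hZ'def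
  have hAtbin : ∀ ω, At ω = 0 ∨ At ω = 1 := by
    intro ω
    rcases hD1bin ω with h1|h1 <;> rcases hY0bin ω with k0|k0 <;>
      rcases hY1bin ω with k1|k1 <;> simp [hAtdef, h1, k0, k1]
  have hBtbin : ∀ ω, Bt ω = 0 ∨ Bt ω = 1 := by
    intro ω
    rcases hD0bin ω with h1|h1 <;> rcases hY0bin ω with k0|k0 <;>
      rcases hY1bin ω with k1|k1 <;> simp [hBtdef, h1, k0, k1]
  have hAtm : Measurable At := (hD1m.mul hY1m).add ((measurable_const.sub hD1m).mul hY0m)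
  have hBtm : Measurable Bt := (hD0m.mul hY1m).add ((measurable_const.sub hD0m).mul hY0m)
  -- integrability w.r.t. μc
  have hintc : Integrable (fun ω => h (X ω)) μc := by
    rw [hμcdef, ProbabilityTheory.cond]
    exact (hint.integrableOn).smul_measure (ENNReal.inv_ne_top.mpr hsne)
  have hZc : Integrable Z μc := integrable_of_bdd hZm (fun ω => bin_abs_le_one (hZbin ω))
  have hAtc : Integrable At μc := integrable_of_bdd hAtm (fun ω => bin_abs_le_one (hAtbin ω))
  have hBtc : Integrable Bt μc := integrable_of_bdd hBtm (fun ω => bin_abs_le_one (hBtbin ω))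
  have hAc : Integrable A μc := by
    have e1 : A = fun ω => At ω * h (X ω) := by funext ω; rw [hAdef]; ring
    rw [e1]
    exact hintc.bdd_mul hAtm.aestronglyMeasurable
      (ae_of_all _ fun ω => by simpa [Real.norm_eq_abs] using bin_abs_le_one (hAtbin ω))
  have hBc : Integrable B μc := by
    have e1 : B = fun ω => Bt ω * h (X ω) := by funext ω; rw [hBdef]; ring
    rw [e1]
    exact hintc.bdd_mul hBtm.aestronglyMeasurable
      (ae_of_all _ fun ω => by simpa [Real.norm_eq_abs] using bin_abs_le_one (hBtbin ω))
  have hZAc : Integrable (fun ω => Z ω * A ω) μc :=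
    hAc.bdd_mul hZm.aestronglyMeasurable
      (ae_of_all _ fun ω => by simpa [Real.norm_eq_abs] using bin_abs_le_one (hZbin ω))
  have hZ'Bc : Integrable (fun ω => Z' ω * B ω) μc := by
    refine hBc.bdd_mul ((measurable_const.sub hZm)).aestronglyMeasurable (c := 1) (ae_of_all _ fun ω => ?_)
    rcases hZbin ω with hz|hz <;> simp [hZ'def, hz]
  have hZAtc : Integrable (fun ω => Z ω * At ω) μc :=
    hAtc.bdd_mul hZm.aestronglyMeasurable
      (ae_of_all _ fun ω => by simpa [Real.norm_eq_abs] using bin_abs_le_one (hZbin ω))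
  have hZ'Btc : Integrable (fun ω => Z' ω * Bt ω) μc := by
    refine hBtc.bdd_mul ((measurable_const.sub hZm)).aestronglyMeasurable (c := 1) (ae_of_all _ fun ω => ?_)
    rcases hZbin ω with hz|hz <;> simp [hZ'def, hz]
  -- independence facts
  have hindAt : IndepFun At Z μc := by
    have hφ : Measurable (fun v : ℝ × ℝ × ℝ × ℝ × ℝ =>
        v.2.2.2.2 * v.2.2.1 + (1 - v.2.2.2.2) * v.2.1) := by fun_prop
    exact hind.comp hφ measurable_id
  have hindBt : IndepFun Bt Z μc := by
    have hφ : Measurable (fun v : ℝ × ℝ × ℝ × ℝ × ℝ =>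
        v.2.2.2.1 * v.2.2.1 + (1 - v.2.2.2.1) * v.2.1) := by fun_prop
    exact hind.comp hφ measurable_id
  have hindA : IndepFun A Z μc := by
    have hφ : Measurable (fun v : ℝ × ℝ × ℝ × ℝ × ℝ =>
        h v.1 * (v.2.2.2.2 * v.2.2.1 + (1 - v.2.2.2.2) * v.2.1)) := by fun_prop
    exact hind.comp hφ measurable_id
  have hindB : IndepFun B Z μc := by
    have hφ : Measurable (fun v : ℝ × ℝ × ℝ × ℝ × ℝ =>
        h v.1 * (v.2.2.2.1 * v.2.2.1 + (1 - v.2.2.2.1) * v.2.1)) := by fun_prop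
    exact hind.comp hφ measurable_id

  -- expectation values under the conditional measure
  set EZ := ∫ ω, Z ω ∂μc with hEZdef
  have hcEZ : c = EZ := by rw [hc, hcm]
  set EA := ∫ ω, A ω ∂μc with hEAdef
  set EB := ∫ ω, B ω ∂μc with hEBdef
  set EAt := ∫ ω, At ω ∂μc with hEAtdef
  set EBt := ∫ ω, Bt ω ∂μc with hEBtdef
  have hZ'c : Integrable Z' μc := by
    have : Z' = fun ω => 1 - Z ω := hZ'def
    rw [this]
    exact (integrable_const 1).sub hZc
  have hEZ' : ∫ ω, Z' ω ∂μc = 1 - c := by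
    have e1 : Z' = fun ω => 1 - Z ω := hZ'def
    rw [e1, integral_sub (integrable_const 1) hZc, integral_const, measureReal_def, measure_univ,
      ENNReal.toReal_one, smul_eq_mul, mul_one, hcEZ]
  -- product formulas from independence
  have hindAZ' : IndepFun A Z' μc :=
    hindA.comp measurable_id (measurable_const.sub measurable_id)
  have hindBZ' : IndepFun B Z' μc :=
    hindB.comp measurable_id (measurable_const.sub measurable_id)
  have hindAtZ' : IndepFun At Z' μc :=
    hindAt.comp measurable_id (measurable_const.sub measurable_id)
  have hindBtZ' : IndepFun Bt Z' μc :=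
    hindBt.comp measurable_id (measurable_const.sub measurable_id)
  have hmulZA : ∫ ω, Z ω * A ω ∂μc = c * EA := by
    have h1 := hindA.integral_mul_eq_mul_integral hAc.aestronglyMeasurable hZc.aestronglyMeasurable
    calc ∫ ω, Z ω * A ω ∂μc = ∫ ω, (A * Z) ω ∂μc :=
          integral_congr_ae (ae_of_all _ fun ω => by simp [Pi.mul_apply, mul_comm])
      _ = EA * EZ := h1
      _ = c * EA := by rw [hcEZ]; ring
  have hmulZ'B : ∫ ω, Z' ω * B ω ∂μc = (1 - c) * EB := by
    have h1 := hindBZ'.integral_mul_eq_mul_integral hBc.aestronglyMeasurable hZ'c.aestronglyMeasurable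
    calc ∫ ω, Z' ω * B ω ∂μc = ∫ ω, (B * Z') ω ∂μc :=
          integral_congr_ae (ae_of_all _ fun ω => by simp [Pi.mul_apply, mul_comm])
      _ = EB * ∫ ω, Z' ω ∂μc := h1
      _ = (1 - c) * EB := by rw [hEZ']; ring
  have hmulZAt : ∫ ω, Z ω * At ω ∂μc = c * EAt := by
    have h1 := hindAt.integral_mul_eq_mul_integral hAtc.aestronglyMeasurable hZc.aestronglyMeasurable
    calc ∫ ω, Z ω * At ω ∂μc = ∫ ω, (At * Z) ω ∂μc :=
          integral_congr_ae (ae_of_all _ fun ω => by simp [Pi.mul_apply, mul_comm])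
      _ = EAt * EZ := h1
      _ = c * EAt := by rw [hcEZ]; ring
  have hmulZ'Bt : ∫ ω, Z' ω * Bt ω ∂μc = (1 - c) * EBt := by
    have h1 := hindBtZ'.integral_mul_eq_mul_integral hBtc.aestronglyMeasurable hZ'c.aestronglyMeasurable
    calc ∫ ω, Z' ω * Bt ω ∂μc = ∫ ω, (Bt * Z') ω ∂μc :=
          integral_congr_ae (ae_of_all _ fun ω => by simp [Pi.mul_apply, mul_comm])
      _ = EBt * ∫ ω, Z' ω ∂μc := h1
      _ = (1 - c) * EBt := by rw [hEZ']; ring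
  -- complier set
  set C : Set Ω := {ω | D0 ω < D1 ω ∧ Y0 ω < Y1 ω} with hCdef
  have hCmeas : MeasurableSet C :=
    (measurableSet_lt hD0m hD1m).inter (measurableSet_lt hY0m hY1m)
  have hmD' : ∀ᵐ ω ∂μc, D0 ω ≤ D1 ω := hmonoD.filter_mono habs.ae_le
  have hmY' : ∀ᵐ ω ∂μc, Y0 ω ≤ Y1 ω := hmonoY.filter_mono habs.ae_le
  have hptind : ∀ ω, D0 ω ≤ D1 ω → Y0 ω ≤ Y1 ω →
      (D1 ω - D0 ω) * (Y1 ω - Y0 ω) = Set.indicator C (fun _ => (1:ℝ)) ω := by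
    intro ω hd0 hy0
    rcases hD0bin ω with h0|h0 <;> rcases hD1bin ω with h1|h1 <;>
      rcases hY0bin ω with k0|k0 <;> rcases hY1bin ω with k1|k1 <;>
      simp only [Set.indicator_apply, hCdef, Set.mem_setOf_eq, h0, h1, k0, k1] at hd0 hy0 ⊢ <;>
      first
        | (exfalso; norm_num at hd0; done)
        | (exfalso; norm_num at hy0; done)
        | norm_num
  have haeA : ∀ᵐ ω ∂μc, A ω - B ω = Set.indicator C (fun ω' => h (X ω')) ω := by
    filter_upwards [hmD', hmY'] with ω hd0 hy0
    have hpt := hptind ω hd0 hy0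
    have e1 : A ω - B ω = h (X ω) * ((D1 ω - D0 ω) * (Y1 ω - Y0 ω)) := by
      simp only [hAdef, hBdef, hAtdef, hBtdef]; ring
    rw [e1, hpt]
    by_cases hω : ω ∈ C <;> simp [Set.indicator_apply, hω]
  have haeAt : ∀ᵐ ω ∂μc, At ω - Bt ω = Set.indicator C (fun _ => (1:ℝ)) ω := by
    filter_upwards [hmD', hmY'] with ω hd0 hy0
    have hpt := hptind ω hd0 hy0
    have e1 : At ω - Bt ω = (D1 ω - D0 ω) * (Y1 ω - Y0 ω) := by
      simp only [hAtdef, hBtdef]; ring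
    rw [e1, hpt]
  set IC := ∫ ω in C, h (X ω) ∂μc with hICdef
  set q := (μc C).toReal with hqdef
  have hEABdiff : EA - EB = IC := by
    rw [hEAdef, hEBdef, ← integral_sub hAc hBc, integral_congr_ae haeA,
      integral_indicator hCmeas, hICdef]
  have hEAtBt : EAt - EBt = q := by
    rw [hEAtdef, hEBtdef, ← integral_sub hAtc hBtc, integral_congr_ae haeAt,
      integral_indicator_const _ hCmeas, measureReal_def, smul_eq_mul, mul_one, hqdef]
  -- bridging set integrals over s and μc-integrals
  have hsP : ∀ g : Ω → ℝ, ∫ ω in s, g ω ∂μ = P * ∫ ω, g ω ∂μc := by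
    intro g
    rw [← hcm g, cmean, ← hPdef, mul_div_cancel₀ _ hPne]
  -- measure of Z-slices within s
  have hZeq1 : MeasurableSet {ω' : Ω | Z ω' = 1} := hZm (measurableSet_singleton 1)
  have hZeq0 : MeasurableSet {ω' : Ω | Z ω' = 0} := hZm (measurableSet_singleton 0)
  have hintsZ : ∫ ω in s, Z ω ∂μ = (μ (s ∩ {ω' | Z ω' = 1})).toReal := by
    have e1 : ∀ ω, Z ω = Set.indicator {ω' | Z ω' = 1} (fun _ => (1:ℝ)) ω := by
      intro ω; rcases hZbin ω with hz|hz <;> simp [Set.indicator_apply, hz]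
    rw [setIntegral_congr_fun hs (fun ω _ => e1 ω), setIntegral_indicator hZeq1,
      setIntegral_const, measureReal_def, smul_eq_mul, mul_one]
  have hintsZ' : ∫ ω in s, Z' ω ∂μ = (μ (s ∩ {ω' | Z ω' = 0})).toReal := by
    have e1 : ∀ ω, Z' ω = Set.indicator {ω' | Z ω' = 0} (fun _ => (1:ℝ)) ω := by
      intro ω; rcases hZbin ω with hz|hz <;> simp [hZ'def, Set.indicator_apply, hz]
    rw [setIntegral_congr_fun hs (fun ω _ => e1 ω), setIntegral_indicator hZeq0,
      setIntegral_const, measureReal_def, smul_eq_mul, mul_one]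
  have hm1R : (μ (s ∩ {ω' | Z ω' = 1})).toReal = P * c := by
    rw [← hintsZ, hsP Z, ← hEZdef, ← hcEZ]
  have hm0R : (μ (s ∩ {ω' | Z ω' = 0})).toReal = P * (1 - c) := by
    rw [← hintsZ', hsP Z', hEZ']
  have hcpos : 0 < c := by
    have h1 : 0 < (μ (s ∩ {ω' | Z ω' = 1})).toReal := by
      refine ENNReal.toReal_pos (ne_of_gt ?_) (measure_ne_top μ _)
      rwa [Set.inter_comm]
    nlinarith [hm1R, hPpos]
  have hclt : c < 1 := by
    have h1 : (μ (s ∩ {ω' | Z ω' = 1})).toReal < P := by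
      rw [hPdef]
      exact ENNReal.toReal_lt_toReal (measure_ne_top μ _) (measure_ne_top μ _) |>.mpr
        (by rwa [Set.inter_comm])
    nlinarith [hm1R, hPpos]
  -- reduced form equals the complier share q
  have pt3 : ∀ ω, Y ω * Z ω = Z ω * At ω := by
    intro ω
    simp only [hAtdef]
    rcases hZbin ω with hz|hz <;> rw [hY ω, hD ω, hz] <;> ring
  have pt4 : ∀ ω, Y ω * Z' ω = Z' ω * Bt ω := by
    intro ω
    simp only [hBtdef, hZ'def]
    rcases hZbin ω with hz|hz <;> rw [hY ω, hD ω, hz] <;> ring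
  have hcm1 : cmean μ Y (s ∩ {ω' | Z ω' = 1}) = EAt := by
    have e1 : ∫ ω in s ∩ {ω' | Z ω' = 1}, Y ω ∂μ = ∫ ω in s, Y ω * Z ω ∂μ := by
      rw [← setIntegral_indicator hZeq1]
      refine setIntegral_congr_fun hs (fun ω _ => ?_)
      rcases hZbin ω with hz|hz <;> simp [Set.indicator_apply, hz]
    have e2 : ∫ ω in s, Y ω * Z ω ∂μ = P * (c * EAt) := by
      rw [hsP, integral_congr_ae (ae_of_all _ pt3), hmulZAt]
    rw [cmean, e1, e2, hm1R]
    field_simp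
  have hcm0 : cmean μ Y (s ∩ {ω' | Z ω' = 0}) = EBt := by
    have e1 : ∫ ω in s ∩ {ω' | Z ω' = 0}, Y ω ∂μ = ∫ ω in s, Y ω * Z' ω ∂μ := by
      rw [← setIntegral_indicator hZeq0]
      refine setIntegral_congr_fun hs (fun ω _ => ?_)
      rcases hZbin ω with hz|hz <;> simp [hZ'def, Set.indicator_apply, hz]
    have e2 : ∫ ω in s, Y ω * Z' ω ∂μ = P * ((1 - c) * EBt) := by
      rw [hsP, integral_congr_ae (ae_of_all _ pt4), hmulZ'Bt]
    rw [cmean, e1, e2, hm0R]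
    have h1c : (0:ℝ) < 1 - c := by linarith
    field_simp
  have hRFq : RF = q := by rw [hRF, hcm1, hcm0, hEAtBt]
  -- the two main integral computations
  have pt1 : ∀ ω, h (X ω) * Y ω * (Z ω - c)
      = (1 - c) * (Z ω * A ω) - c * (Z' ω * B ω) := by
    intro ω
    simp only [hAdef, hBdef, hAtdef, hBtdef, hZ'def]
    rcases hZbin ω with hz|hz <;> rw [hY ω, hD ω, hz] <;> ring
  have pt2 : ∀ ω, Y ω * (Z ω - c)
      = (1 - c) * (Z ω * At ω) - c * (Z' ω * Bt ω) := by
    intro ω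
    simp only [hAtdef, hBtdef, hZ'def]
    rcases hZbin ω with hz|hz <;> rw [hY ω, hD ω, hz] <;> ring
  have hK1' : cmean μ (fun ω => h (X ω) * Y ω * (Z ω - c)) s = c * (1 - c) * IC := by
    rw [hcm, integral_congr_ae (ae_of_all _ pt1),
      integral_sub (hZAc.const_mul _) (hZ'Bc.const_mul _),
      integral_const_mul, integral_const_mul, hmulZA, hmulZ'B, ← hEABdiff]
    ring
  have hK2' : cmean μ (fun ω => Y ω * (Z ω - c)) s = c * (1 - c) * q := by
    rw [hcm, integral_congr_ae (ae_of_all _ pt2),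
      integral_sub (hZAtc.const_mul _) (hZ'Btc.const_mul _),
      integral_const_mul, integral_const_mul, hmulZAt, hmulZ'Bt, ← hEAtBt]
    ring
  -- express cc
  have hIC_s : ∫ ω in C ∩ s, h (X ω) ∂μ = P * IC := by
    have hrestr : μc.restrict C = (μ s)⁻¹ • μ.restrict (C ∩ s) := by
      rw [hμcdef, ProbabilityTheory.cond, Measure.restrict_smul,
        Measure.restrict_restrict hCmeas]
    have e1 : IC = P⁻¹ * ∫ ω in C ∩ s, h (X ω) ∂μ := by
      rw [hICdef]
      show ∫ ω, h (X ω) ∂(μc.restrict C) = _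
      rw [hrestr, integral_smul_measure, ENNReal.toReal_inv, ← hPdef, smul_eq_mul]
    rw [e1]
    field_simp
  have hq_s : (μ (C ∩ s)).toReal = P * q := by
    have e1 : μc C = (μ s)⁻¹ * μ (s ∩ C) := by
      rw [hμcdef]
      exact cond_apply hs μ C
    have e2 : q = P⁻¹ * (μ (s ∩ C)).toReal := by
      rw [hqdef, e1, ENNReal.toReal_mul, ENNReal.toReal_inv, ← hPdef]
    rw [Set.inter_comm C s, e2]
    field_simp
  have hccval : cc = (P * IC) / (P * q) := by
    rw [hcc, cmean, hIC_s, hq_s]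
  constructor
  · rw [hK1', hRFq, hccval]
    rcases eq_or_ne q 0 with hq0 | hq0
    · have hμcC : μc C = 0 := by
        rcases (ENNReal.toReal_eq_zero_iff _).mp (hqdef ▸ hq0) with h1 | h1
        · exact h1
        · exact absurd h1 (measure_ne_top μc C)
      have hIC0 : IC = 0 := by
        rw [hICdef]
        show ∫ ω, h (X ω) ∂(μc.restrict C) = 0
        rw [Measure.restrict_eq_zero.mpr hμcC, integral_zero_measure]
      rw [hIC0, hq0]
      ring
    · rw [mul_div_mul_left _ _ hPne]
      field_simp
  · rw [hK2', hRFq]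
    ring

theorem stratified_nonnegative_weights
    {Ω : Type} [MeasurableSpace Ω] (μ : Measure Ω) [IsProbabilityMeasure μ]
    (Z D0 D1 Y0 Y1 D Y X W : Ω → ℝ)
    (hZm : Measurable Z) (hD0m : Measurable D0) (hD1m : Measurable D1)
    (hY0m : Measurable Y0) (hY1m : Measurable Y1) (hXm : Measurable X)
    (hWm : Measurable W) (hWcnt : (Set.range W).Countable)
    (hZbin : ∀ ω, Z ω = 0 ∨ Z ω = 1)
    (hD0bin : ∀ ω, D0 ω = 0 ∨ D0 ω = 1)
    (hD1bin : ∀ ω, D1 ω = 0 ∨ D1 ω = 1)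
    (hY0bin : ∀ ω, Y0 ω = 0 ∨ Y0 ω = 1)
    (hY1bin : ∀ ω, Y1 ω = 0 ∨ Y1 ω = 1)
    (hD : ∀ ω, D ω = Z ω * D1 ω + (1 - Z ω) * D0 ω)
    (hY : ∀ ω, Y ω = D ω * Y1 ω + (1 - D ω) * Y0 ω)
    (h : ℝ → ℝ) (hhm : Measurable h)
    (hint : Integrable (fun ω => h (X ω)) μ)
    -- conditional independence given each stratum of W
    (hcind : ∀ w : ℝ, μ {ω | W ω = w} ≠ 0 →
      IndepFun (fun ω => (X ω, Y0 ω, Y1 ω, D0 ω, D1 ω)) Z (μ[|{ω | W ω = w}]))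
    -- overlap within each stratum: 0 < P(Z=1|W) < 1
    (hoverlap : ∀ w : ℝ, μ {ω | W ω = w} ≠ 0 →
      0 < μ ({ω | Z ω = 1} ∩ {ω | W ω = w})
        ∧ μ ({ω | Z ω = 1} ∩ {ω | W ω = w}) < μ {ω | W ω = w})
    -- treatment and outcome monotonicity
    (hmonoD : ∀ᵐ ω ∂μ, D0 ω ≤ D1 ω)
    (hmonoY : ∀ᵐ ω ∂μ, Y0 ω ≤ Y1 ω)
    -- E[Z|W] as a function of W, and the saturation (linear projection) condition
    (e : Ω → ℝ) (he : ∀ ω, e ω = cmean μ Z {ω' | W ω' = W ω})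
    (hlin : ∃ a b : ℝ, ∀ ω, e ω = a + b * W ω)
    -- conditional reduced form RF_W
    (RFw : Ω → ℝ)
    (hRFw : ∀ ω, RFw ω
      = cmean μ Y ({ω' | W ω' = W ω} ∩ {ω' | Z ω' = 1})
        - cmean μ Y ({ω' | W ω' = W ω} ∩ {ω' | Z ω' = 0}))
    (hRFnonneg : ∀ ω, 0 ≤ RFw ω)
    (hRFpos : ∃ ω, μ {ω' | W ω' = W ω} ≠ 0 ∧ 0 < RFw ω)
    -- positive supercomplier share in strata with positive reduced form
    (hccpos : ∀ w : ℝ, μ {ω | W ω = w} ≠ 0 →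
      (∀ ω, W ω = w → 0 < RFw ω) →
      0 < μ ({ω | D0 ω < D1 ω ∧ Y0 ω < Y1 ω} ∩ {ω | W ω = w}))
    -- the stratum weight and the conditional supercomplier characteristic
    (wgt cchar : Ω → ℝ)
    (hwgt : ∀ ω, wgt ω = RFw ω * (1 - e ω) * e ω)
    (hcchar : ∀ ω, cchar ω
      = cmean μ (fun ω' => h (X ω'))
          ({ω' | D0 ω' < D1 ω' ∧ Y0 ω' < Y1 ω'} ∩ {ω' | W ω' = W ω})) :
    ((∫ ω, h (X ω) * Y ω * (Z ω - e ω) ∂μ) / (∫ ω, Y ω * (Z ω - e ω) ∂μ)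
      = (∫ ω, wgt ω * cchar ω ∂μ) / (∫ ω, wgt ω ∂μ))
    ∧ (∀ ω, 0 ≤ wgt ω) := by
  classical
  have hsmeas : ∀ w : ℝ, MeasurableSet {ω' | W ω' = w} :=
    fun w => hWm (measurableSet_singleton w)
  have hZint : Integrable Z μ := integrable_of_bdd hZm (fun ω => bin_abs_le_one (hZbin ω))
  -- bounds on e
  have hebd : ∀ ω, 0 ≤ e ω ∧ e ω ≤ 1 := by
    intro ω
    rw [he ω, cmean]
    constructor
    · apply div_nonneg _ ENNReal.toReal_nonneg
      apply setIntegral_nonneg (hsmeas (W ω))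
      intro ω' _; rcases hZbin ω' with hz|hz <;> simp [hz]
    · rcases eq_or_ne (μ {ω' | W ω' = W ω}) 0 with h0 | h0
      · rw [Measure.restrict_eq_zero.mpr h0, integral_zero_measure, zero_div]
        norm_num
      · rw [div_le_one (ENNReal.toReal_pos h0 (measure_ne_top μ _))]
        calc ∫ ω' in {ω' | W ω' = W ω}, Z ω' ∂μ
            ≤ ∫ ω' in {ω' | W ω' = W ω}, 1 ∂μ := by
              refine setIntegral_mono_on hZint.integrableOn
                (integrable_const 1).integrableOn (hsmeas (W ω)) (fun ω' _ => ?_)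
              rcases hZbin ω' with hz|hz <;> simp [hz]
          _ = (μ {ω' | W ω' = W ω}).toReal := by
              rw [setIntegral_const, measureReal_def, smul_eq_mul, mul_one]
  have hwgtnn : ∀ ω, 0 ≤ wgt ω := by
    intro ω
    rw [hwgt ω]
    have h1 := (hebd ω).1
    have h2 := (hebd ω).2
    have h3 := hRFnonneg ω
    have : 0 ≤ 1 - e ω := by linarith
    exact mul_nonneg (mul_nonneg h3 this) h1
  refine ⟨?_, hwgtnn⟩
  -- measurability of auxiliary functions
  have hDm : Measurable D := by
    have : D = fun ω => Z ω * D1 ω + (1 - Z ω) * D0 ω := funext hD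
    rw [this]
    exact (hZm.mul hD1m).add ((measurable_const.sub hZm).mul hD0m)
  have hYm : Measurable Y := by
    have : Y = fun ω => D ω * Y1 ω + (1 - D ω) * Y0 ω := funext hY
    rw [this]
    exact (hDm.mul hY1m).add ((measurable_const.sub hDm).mul hY0m)
  have hYbin : ∀ ω, Y ω = 0 ∨ Y ω = 1 := by
    intro ω
    have hDbin : D ω = 0 ∨ D ω = 1 := by
      rcases hZbin ω with hz|hz <;> rcases hD0bin ω with h0|h0 <;>
        rcases hD1bin ω with h1|h1 <;> rw [hD ω, hz, h0, h1] <;> norm_num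
    rcases hDbin with hd|hd <;> rcases hY0bin ω with k0|k0 <;>
      rcases hY1bin ω with k1|k1 <;> rw [hY ω, hd, k0, k1] <;> norm_num
  have hem : Measurable e := by
    have : e = fun ω => (fun w => cmean μ Z {ω' | W ω' = w}) (W ω) := funext fun ω => he ω
    rw [this]
    exact measurable_comp_cntW hWm hWcnt (fun w => cmean μ Z {ω' | W ω' = w})
  -- the bounded factor
  have hubdd : ∀ ω, |Y ω * (Z ω - e ω)| ≤ 2 := by
    intro ω
    have h1 := (hebd ω).1
    have h2 := (hebd ω).2
    have h3 : |Y ω| ≤ 1 := bin_abs_le_one (hYbin ω)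
    have h4 : |Z ω - e ω| ≤ 2 := by
      rcases hZbin ω with hz|hz <;> rw [hz, abs_le] <;> constructor <;> linarith
    calc |Y ω * (Z ω - e ω)| = |Y ω| * |Z ω - e ω| := abs_mul _ _
      _ ≤ 1 * 2 := mul_le_mul h3 h4 (abs_nonneg _) zero_le_one
      _ = 2 := by norm_num
  have hum : Measurable (fun ω => Y ω * (Z ω - e ω)) := hYm.mul (hZm.sub hem)
  have hf1int : Integrable (fun ω => h (X ω) * Y ω * (Z ω - e ω)) μ := by
    have e1 : (fun ω => h (X ω) * Y ω * (Z ω - e ω))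
        = fun ω => (Y ω * (Z ω - e ω)) * h (X ω) := by funext ω; ring
    rw [e1]
    exact hint.bdd_mul hum.aestronglyMeasurable
      (ae_of_all _ fun ω => by rw [Real.norm_eq_abs]; exact hubdd ω)
  have hf2int : Integrable (fun ω => Y ω * (Z ω - e ω)) μ :=
    integrable_of_bdd hum hubdd
  -- the pointwise identification on each stratum
  have key : ∀ ω₀ : Ω,
      wgt ω₀ * cchar ω₀
        = cmean μ (fun ω => h (X ω) * Y ω * (Z ω - e ω)) {ω' | W ω' = W ω₀}
      ∧ wgt ω₀ = cmean μ (fun ω => Y ω * (Z ω - e ω)) {ω' | W ω' = W ω₀} := by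
    intro ω₀
    have hsm : MeasurableSet {ω' | W ω' = W ω₀} := hsmeas (W ω₀)
    rcases eq_or_ne (μ {ω' | W ω' = W ω₀}) 0 with h0 | h0
    · have hres : μ.restrict {ω' | W ω' = W ω₀} = 0 := Measure.restrict_eq_zero.mpr h0
      have hcm0 : ∀ g : Ω → ℝ, cmean μ g {ω' | W ω' = W ω₀} = 0 := by
        intro g; rw [cmean, hres, integral_zero_measure, zero_div]
      have he0 : e ω₀ = 0 := by rw [he ω₀, hcm0]
      have hw0 : wgt ω₀ = 0 := by rw [hwgt ω₀, he0]; ring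
      rw [hw0, hcm0, hcm0]
      simp
    · have heconst : ∀ ω' ∈ {ω' | W ω' = W ω₀}, e ω' = e ω₀ := by
        intro ω' hω'
        have hW : W ω' = W ω₀ := hω'
        rw [he ω', he ω₀, hW]
      have hcongr1 : cmean μ (fun ω => h (X ω) * Y ω * (Z ω - e ω)) {ω' | W ω' = W ω₀}
          = cmean μ (fun ω => h (X ω) * Y ω * (Z ω - e ω₀)) {ω' | W ω' = W ω₀} := by
        rw [cmean, cmean, setIntegral_congr_fun hsm (fun ω hω => by rw [heconst ω hω])]
      have hcongr2 : cmean μ (fun ω => Y ω * (Z ω - e ω)) {ω' | W ω' = W ω₀}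
          = cmean μ (fun ω => Y ω * (Z ω - e ω₀)) {ω' | W ω' = W ω₀} := by
        rw [cmean, cmean, setIntegral_congr_fun hsm (fun ω hω => by rw [heconst ω hω])]
      obtain ⟨K1, K2⟩ := stratum_key μ Z D0 D1 Y0 Y1 D Y X hZm hD0m hD1m hY0m hY1m hXm
        hZbin hD0bin hD1bin hY0bin hY1bin hD hY h hhm hint
        {ω' | W ω' = W ω₀} hsm h0 (hcind (W ω₀) h0)
        ((hoverlap (W ω₀) h0).1) ((hoverlap (W ω₀) h0).2) hmonoD hmonoY
        (e ω₀) (RFw ω₀) (cchar ω₀) (he ω₀) (hRFw ω₀) (hcchar ω₀)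
      constructor
      · rw [hcongr1, K1, hwgt ω₀]
      · rw [hcongr2, K2, hwgt ω₀]
  -- conclude via the tower property
  have hnum : ∫ ω, h (X ω) * Y ω * (Z ω - e ω) ∂μ = ∫ ω, wgt ω * cchar ω ∂μ := by
    calc ∫ ω, h (X ω) * Y ω * (Z ω - e ω) ∂μ
        = ∫ ω, cmean μ (fun ω' => h (X ω') * Y ω' * (Z ω' - e ω')) {ω' | W ω' = W ω} ∂μ :=
          (tower_cmean μ hWm hWcnt hf1int).symm
      _ = ∫ ω, wgt ω * cchar ω ∂μ :=
          integral_congr_ae (ae_of_all _ fun ω => ((key ω).1).symm)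
  have hden : ∫ ω, Y ω * (Z ω - e ω) ∂μ = ∫ ω, wgt ω ∂μ := by
    calc ∫ ω, Y ω * (Z ω - e ω) ∂μ
        = ∫ ω, cmean μ (fun ω' => Y ω' * (Z ω' - e ω')) {ω' | W ω' = W ω} ∂μ :=
          (tower_cmean μ hWm hWcnt hf2int).symm
      _ = ∫ ω, wgt ω ∂μ :=
          integral_congr_ae (ae_of_all _ fun ω => ((key ω).2).symm)
  rw [hnum, hden]
end

section
/- Non-identifiability of the always-taker outcome strata: there exist two distinct joint distributions of (Y1, Y0, D1, D0, Z), each binary and each satisfying random assignment, treatment monotonicity, and outcome monotonicity, that induce the same observed distribution of (Y, D, Z) but have different values of Pr(D0 = D1 = 1, Y0 = Y1 = 1). -/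
open MeasureTheory ProbabilityTheory

/-- Coordinates of the latent space `(Y₁, Y₀, D₁, D₀, Z)`. -/
noncomputable abbrev lY1 (q : ℝ × ℝ × ℝ × ℝ × ℝ) : ℝ := q.1
noncomputable abbrev lY0 (q : ℝ × ℝ × ℝ × ℝ × ℝ) : ℝ := q.2.1
noncomputable abbrev lD1 (q : ℝ × ℝ × ℝ × ℝ × ℝ) : ℝ := q.2.2.1
noncomputable abbrev lD0 (q : ℝ × ℝ × ℝ × ℝ × ℝ) : ℝ := q.2.2.2.1
noncomputable abbrev lZ (q : ℝ × ℝ × ℝ × ℝ × ℝ) : ℝ := q.2.2.2.2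

/-- Observed treatment induced by the latent variables. -/
noncomputable def lD (q : ℝ × ℝ × ℝ × ℝ × ℝ) : ℝ :=
  lZ q * lD1 q + (1 - lZ q) * lD0 q

/-- Observed (Y, D, Z) induced by the latent variables. -/
noncomputable def obsMap (q : ℝ × ℝ × ℝ × ℝ × ℝ) : ℝ × ℝ × ℝ :=
  (lD q * lY1 q + (1 - lD q) * lY0 q, lD q, lZ q)

/-- A latent distribution satisfying random assignment, treatment monotonicity,
and outcome monotonicity, with a nondegenerate instrument. -/
def ValidLatent (ν : Measure (ℝ × ℝ × ℝ × ℝ × ℝ)) : Prop :=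
  IsProbabilityMeasure ν
  ∧ (∀ᵐ q ∂ν, (lY1 q = 0 ∨ lY1 q = 1) ∧ (lY0 q = 0 ∨ lY0 q = 1)
      ∧ (lD1 q = 0 ∨ lD1 q = 1) ∧ (lD0 q = 0 ∨ lD0 q = 1)
      ∧ (lZ q = 0 ∨ lZ q = 1))
  ∧ IndepFun (fun q => (lY1 q, lY0 q, lD1 q, lD0 q)) lZ ν
  ∧ 0 < ν {q | lZ q = 1} ∧ ν {q | lZ q = 1} < 1
  ∧ (∀ᵐ q ∂ν, lD0 q ≤ lD1 q)
  ∧ (∀ᵐ q ∂ν, lY0 q ≤ lY1 q)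


section helpers

variable {α : Type*} [MeasurableSpace α] [MeasurableSingletonClass α]

noncomputable def twoPt (a b : α) : Measure α :=
  (2:ENNReal)⁻¹ • (Measure.dirac a + Measure.dirac b)

lemma twoPt_apply (a b : α) (s : Set α) :
    twoPt a b s = 2⁻¹ * (s.indicator 1 a + s.indicator 1 b) := by
  simp [twoPt, Measure.dirac_apply, mul_add]

lemma twoPt_prob (a b : α) : IsProbabilityMeasure (twoPt a b) := by
  constructor
  rw [twoPt_apply]
  simp
  rw [show ((1:ENNReal)+1) = 2 from by norm_num, ENNReal.inv_mul_cancel] <;> norm_num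

lemma twoPt_ae (a b : α) (p : α → Prop) : (∀ᵐ x ∂twoPt a b, p x) ↔ p a ∧ p b := by
  rw [twoPt, Measure.ae_ennreal_smul_measure_iff (by norm_num), ae_add_measure_iff,
    ae_dirac_eq, ae_dirac_eq]
  simp

lemma twoPt_indep {β γ : Type*} [MeasurableSpace β] [MeasurableSpace γ]
    (a b : α) (f : α → β) (g : α → γ) (hf : f a = f b) :
    IndepFun f g (twoPt a b) := by
  classical
  rw [indepFun_iff_measure_inter_preimage_eq_mul]
  intro s t _ _
  rw [twoPt_apply, twoPt_apply, twoPt_apply]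
  simp only [Set.indicator_apply, Set.mem_inter_iff, Set.mem_preimage, hf, Pi.one_apply]
  by_cases hs : f b ∈ s <;> by_cases ht1 : g a ∈ t <;> by_cases ht2 : g b ∈ t <;>
    simp [hs, ht1, ht2] <;>
    rw [show ((1:ENNReal)+1) = 2 from by norm_num, ENNReal.inv_mul_cancel] <;> norm_num

end helpers


lemma obsMap_measurable : Measurable obsMap := by
  unfold obsMap lD
  fun_prop

noncomputable def A1 : ℝ × ℝ × ℝ × ℝ × ℝ := (1,1,1,1,0)
noncomputable def B1 : ℝ × ℝ × ℝ × ℝ × ℝ := (1,1,1,1,1)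
noncomputable def A2 : ℝ × ℝ × ℝ × ℝ × ℝ := (1,0,1,1,0)
noncomputable def B2 : ℝ × ℝ × ℝ × ℝ × ℝ := (1,0,1,1,1)

lemma valid12 : ValidLatent (twoPt A1 B1) ∧ ValidLatent (twoPt A2 B2) := by
  constructor <;>
  · refine ⟨twoPt_prob _ _, ?_, twoPt_indep _ _ _ _ rfl, ?_, ?_, ?_, ?_⟩
    · rw [twoPt_ae]; norm_num [A1, B1, A2, B2, lY1, lY0, lD1, lD0, lZ]
    · rw [show {q | lZ q = 1} = lZ ⁻¹' {1} from rfl, twoPt_apply]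
      norm_num [A1, B1, A2, B2, Set.indicator_apply, lZ]
    · rw [show {q | lZ q = 1} = lZ ⁻¹' {1} from rfl, twoPt_apply]
      norm_num [A1, B1, A2, B2, Set.indicator_apply, lZ]
    · rw [twoPt_ae]; norm_num [A1, B1, A2, B2, lD1, lD0]
    · rw [twoPt_ae]; norm_num [A1, B1, A2, B2, lY1, lY0]

theorem always_taker_share_not_identified :
    ∃ ν₁ ν₂ : Measure (ℝ × ℝ × ℝ × ℝ × ℝ),
      ValidLatent ν₁ ∧ ValidLatent ν₂
      ∧ Measure.map obsMap ν₁ = Measure.map obsMap ν₂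
      ∧ ν₁ {q | lD0 q = 1 ∧ lD1 q = 1 ∧ lY0 q = 1 ∧ lY1 q = 1}
        ≠ ν₂ {q | lD0 q = 1 ∧ lD1 q = 1 ∧ lY0 q = 1 ∧ lY1 q = 1} := by
  refine ⟨twoPt A1 B1, twoPt A2 B2, valid12.1, valid12.2, ?_, ?_⟩
  · rw [twoPt, twoPt, Measure.map_smul, Measure.map_smul, Measure.map_add _ _ obsMap_measurable,
      Measure.map_add _ _ obsMap_measurable, Measure.map_dirac' obsMap_measurable,
      Measure.map_dirac' obsMap_measurable, Measure.map_dirac' obsMap_measurable,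
      Measure.map_dirac' obsMap_measurable]
    norm_num [A1, B1, A2, B2, obsMap, lD, lY1, lY0, lD1, lD0, lZ]
  · rw [twoPt_apply, twoPt_apply]
    norm_num [A1, B1, A2, B2, Set.indicator_apply, lY1, lY0, lD1, lD0, Set.mem_setOf_eq]
end
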